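/- Let V ≥ 2, z : Fin V → ℝ, y₁ ≠ y₂ in Fin V, η' ∈ ℝ, π = σ(z), Δπ = π_{y₁} + π_{y₂}, and define the REINFORCE-updated logits z'_j = z_j − η'·Δπ·π_j for j ∉ {y₁, y₂} and z'_j = z_j − η'·(Δπ − 1)·π_j for j ∈ {y₁, y₂}. Then, with π' = σ(z') and i = y₁, the ratio of probabilities satisfies π'_i / π_i = (Σ_j exp(z_j)) / (Σ_j γ_j exp(z_j)), where γ_j = exp(−η'(Δπ(π_j − π_i) + π_i)) for j ∉ {y₁, y₂}, γ_{y₁} = 1, and γ_{y₂} = exp(−η'(Δπ − 1)(π_{y₂} − π_i)). -/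

import Mathlib

/-- The softmax distribution `σ(z)_i = exp(z_i) / ∑_j exp(z_j)`. -/
noncomputable def softmax {V : ℕ} (z : Fin V → ℝ) (i : Fin V) : ℝ :=
  Real.exp (z i) / ∑ j, Real.exp (z j)

/-- Lemma 1, REINFORCE Case 1: after the REINFORCE logit update
(`z'_j = z_j − η'Δπ·π_j` off the rewarded set, `z'_j = z_j − η'(Δπ−1)·π_j` on it),
the probability of `i = y₁` satisfies
`π'_i / π_i = (∑_j exp(z_j)) / (∑_j γ_j exp(z_j))` with the stated `γ_j`. -/
theorem reinforce_ratio_case1 {V : ℕ} (hV : 2 ≤ V) (z : Fin V → ℝ)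
    (y₁ y₂ : Fin V) (hy : y₁ ≠ y₂) (η' : ℝ) :
    let π := softmax z
    let Δπ := π y₁ + π y₂
    let z' : Fin V → ℝ := fun j =>
      if j = y₁ ∨ j = y₂ then z j - η' * ((Δπ - 1) * π j) else z j - η' * (Δπ * π j)
    let γ : Fin V → ℝ := fun j =>
      if j = y₁ then 1
      else if j = y₂ then Real.exp (-(η' * ((Δπ - 1) * (π y₂ - π y₁))))
      else Real.exp (-(η' * (Δπ * (π j - π y₁) + π y₁)))
    softmax z' y₁ / π y₁ = (∑ j, Real.exp (z j)) / (∑ j, γ j * Real.exp (z j)) := by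
  intro π Δπ z' γ
  have hS : (0:ℝ) < ∑ j, Real.exp (z j) := by
    have : Nonempty (Fin V) := ⟨⟨0, by omega⟩⟩
    exact Finset.sum_pos (fun j _ => Real.exp_pos _) Finset.univ_nonempty
  have hS' : (0:ℝ) < ∑ j, Real.exp (z' j) := by
    have : Nonempty (Fin V) := ⟨⟨0, by omega⟩⟩
    exact Finset.sum_pos (fun j _ => Real.exp_pos _) Finset.univ_nonempty
  -- key pointwise identity
  have hkey : ∀ j, γ j * Real.exp (z j) =
      Real.exp (z' j) * Real.exp (z y₁ - z' y₁) := by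
    intro j
    have hz'y₁ : z' y₁ = z y₁ - η' * ((Δπ - 1) * π y₁) := by
      simp [z']
    rw [hz'y₁]
    by_cases h1 : j = y₁
    · subst h1
      simp [γ, z', ← Real.exp_add]
    · by_cases h2 : j = y₂
      · subst h2
        simp [γ, z', h1, hy.symm, ← Real.exp_add]
        ring_nf
      · simp only [γ, z', h1, h2, if_neg, if_false, or_self, ← Real.exp_add]
        rw [Real.exp_eq_exp]
        ring
  have hsum : (∑ j, γ j * Real.exp (z j)) =
      (∑ j, Real.exp (z' j)) * Real.exp (z y₁ - z' y₁) := by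
    rw [Finset.sum_congr rfl (fun j _ => hkey j), ← Finset.sum_mul]
  have hπ : π y₁ = Real.exp (z y₁) / ∑ j, Real.exp (z j) := rfl
  rw [hsum, hπ]
  unfold softmax
  rw [Real.exp_sub]
  have e1 := (Real.exp_pos (z y₁)).ne'
  have e2 := (Real.exp_pos (z' y₁)).ne'
  have e3 := hS.ne'
  have e4 := hS'.ne'
  generalize Real.exp (z' y₁) = a at *
  generalize Real.exp (z y₁) = b at *
  generalize (∑ j, Real.exp (z' j)) = c at *
  generalize (∑ j, Real.exp (z j)) = d at *
  field_simp
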